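/- arXiv:1303.1043 — 2 statements merged into one kernel-verified Lean document; each statement's English description precedes it below -/
import Mathlib

section
/- The quotient Δ(Z,W) = (ζ' + ζ'' − B0(ζ'Z)ζ''B1(ζ''W) − ζ'B1(ζ'Z)B0(ζ''W))/(Z+W) has constant term 60ζ'ζ'' − 84 and linear term 32760(ζ'Z + ζ''W) − 27720(ζ'W + ζ''Z). -/
open MvPowerSeries

/-- The coefficient of `T^m` in the Faber–Zagier series `B0`. -/
noncomputable def b0coeff (m : ℕ) : ℚ :=
  (-1) ^ m * (Nat.factorial (6 * m) : ℚ) /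
    ((Nat.factorial (2 * m) : ℚ) * (Nat.factorial (3 * m) : ℚ))

/-- The coefficient of `T^m` in the Faber–Zagier series `B1`. -/
noncomputable def b1coeff (m : ℕ) : ℚ :=
  (-1) ^ m * ((1 + 6 * (m : ℚ)) / (1 - 6 * (m : ℚ))) * (Nat.factorial (6 * m) : ℚ) /
    ((Nat.factorial (2 * m) : ℚ) * (Nat.factorial (3 * m) : ℚ))

section

variable (A : Type) [CommRing A] [Algebra ℚ A] (z₁ z₂ : A)

/-- `B0(ζ'Z)` as a two-variable power series (`Z` is the variable `0`, `W` is `1`). -/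
noncomputable def B0Z : MvPowerSeries (Fin 2) A :=
  fun e => if e 1 = 0 then z₁ ^ (e 0) • algebraMap ℚ A (b0coeff (e 0)) else 0

/-- `B1(ζ'Z)`. -/
noncomputable def B1Z : MvPowerSeries (Fin 2) A :=
  fun e => if e 1 = 0 then z₁ ^ (e 0) • algebraMap ℚ A (b1coeff (e 0)) else 0

/-- `B0(ζ''W)`. -/
noncomputable def B0W : MvPowerSeries (Fin 2) A :=
  fun e => if e 0 = 0 then z₂ ^ (e 1) • algebraMap ℚ A (b0coeff (e 1)) else 0

/-- `B1(ζ''W)`. -/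
noncomputable def B1W : MvPowerSeries (Fin 2) A :=
  fun e => if e 0 = 0 then z₂ ^ (e 1) • algebraMap ℚ A (b1coeff (e 1)) else 0

/-- The numerator `ζ' + ζ'' − B0(ζ'Z)·ζ''·B1(ζ''W) − ζ'·B1(ζ'Z)·B0(ζ''W)`. -/
noncomputable def edgeNumerator : MvPowerSeries (Fin 2) A :=
  (MvPowerSeries.C : A →+* MvPowerSeries (Fin 2) A) (z₁ + z₂)
    - B0Z A z₁ * (MvPowerSeries.C : A →+* MvPowerSeries (Fin 2) A) z₂ * B1W A z₂
    - (MvPowerSeries.C : A →+* MvPowerSeries (Fin 2) A) z₁ * B1Z A z₁ * B0W A z₂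

end

private lemma bc0_0 : b0coeff 0 = 1 := by norm_num [b0coeff]
private lemma bc0_1 : b0coeff 1 = -60 := by norm_num [b0coeff, Nat.factorial]
private lemma bc0_2 : b0coeff 2 = 27720 := by norm_num [b0coeff, Nat.factorial]
private lemma bc1_0 : b1coeff 0 = 1 := by norm_num [b1coeff]
private lemma bc1_1 : b1coeff 1 = 84 := by norm_num [b1coeff, Nat.factorial]
private lemma bc1_2 : b1coeff 2 = -32760 := by norm_num [b1coeff, Nat.factorial]

private lemma coeff_XQ (A : Type) [CommRing A] (Q : MvPowerSeries (Fin 2) A)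
    (s : Fin 2) (e : Fin 2 →₀ ℕ) (h : Finsupp.single s 1 ≤ e) :
    MvPowerSeries.coeff e (MvPowerSeries.X s * Q)
      = MvPowerSeries.coeff (e - Finsupp.single s 1) Q := by
  rw [MvPowerSeries.X_def, MvPowerSeries.coeff_monomial_mul, if_pos h, one_mul]

private lemma coeff_XQ_ne (A : Type) [CommRing A] (Q : MvPowerSeries (Fin 2) A)
    (s : Fin 2) (e : Fin 2 →₀ ℕ) (h : ¬ Finsupp.single s 1 ≤ e) :
    MvPowerSeries.coeff e (MvPowerSeries.X s * Q) = 0 := by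
  rw [MvPowerSeries.X_def, MvPowerSeries.coeff_monomial_mul, if_neg h]

theorem edgeQuotient_low_coeffs (A : Type) [CommRing A] [Algebra ℚ A] (z₁ z₂ : A)
    (h₁ : z₁ ^ 2 = 1) (h₂ : z₂ ^ 2 = 1) (Q : MvPowerSeries (Fin 2) A)
    (hQ : (MvPowerSeries.X (0 : Fin 2) + MvPowerSeries.X (1 : Fin 2)) * Q
      = edgeNumerator A z₁ z₂) :
    MvPowerSeries.coeff 0 Q = 60 * (z₁ * z₂) - 84 ∧
    MvPowerSeries.coeff (Finsupp.single (0 : Fin 2) 1) Q = 32760 * z₁ - 27720 * z₂ ∧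
    MvPowerSeries.coeff (Finsupp.single (1 : Fin 2) 1) Q = 32760 * z₂ - 27720 * z₁ := by
  
  classical
  have hsub1 : (Finsupp.single (0:Fin 2) 2) - Finsupp.single (0:Fin 2) 1
      = Finsupp.single (0:Fin 2) 1 := by
    ext i; simp only [Finsupp.tsub_apply, Finsupp.single_apply]; split <;> rfl
  have hsub2 : (Finsupp.single (1:Fin 2) 2) - Finsupp.single (1:Fin 2) 1
      = Finsupp.single (1:Fin 2) 1 := by
    ext i; simp only [Finsupp.tsub_apply, Finsupp.single_apply]; split <;> rfl
  have hle01 : ¬ Finsupp.single (1:Fin 2) 1 ≤ Finsupp.single (0:Fin 2) 1 := by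
    intro h; simpa using h 1
  have hle10 : ¬ Finsupp.single (0:Fin 2) 1 ≤ Finsupp.single (1:Fin 2) 1 := by
    intro h; simpa using h 0
  have hle02 : ¬ Finsupp.single (1:Fin 2) 1 ≤ Finsupp.single (0:Fin 2) 2 := by
    intro h; simpa using h 1
  have hle20 : ¬ Finsupp.single (0:Fin 2) 1 ≤ Finsupp.single (1:Fin 2) 2 := by
    intro h; simpa using h 0
  have hles : ∀ (s : Fin 2) (n : ℕ), 1 ≤ n →
      Finsupp.single s 1 ≤ Finsupp.single s n := fun s n hn => by
    intro i; simp only [Finsupp.single_apply]; split <;> simp [hn]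
  -- coefficient of the numerator at single s n
  have hnum : ∀ (s : Fin 2) (n : ℕ), 1 ≤ n → n ≤ 2 →
      MvPowerSeries.coeff (Finsupp.single s n) (edgeNumerator A z₁ z₂)
        = - (z₁ ^ (if s = 0 then n else 0) * algebraMap ℚ A (b0coeff (if s = 0 then n else 0))
              * z₂ * (z₂ ^ (if s = 0 then 0 else n) * algebraMap ℚ A (b1coeff (if s = 0 then 0 else n))))
          - (z₁ * (z₁ ^ (if s = 0 then n else 0) * algebraMap ℚ A (b1coeff (if s = 0 then n else 0)))
              * (z₂ ^ (if s = 0 then 0 else n) * algebraMap ℚ A (b0coeff (if s = 0 then 0 else n)))) := by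
    intro s n h1 h2
    have hC : MvPowerSeries.coeff (Finsupp.single s n) ((MvPowerSeries.C : A →+* MvPowerSeries (Fin 2) A) (z₁ + z₂)) = 0 := by
      rw [MvPowerSeries.coeff_C, if_neg]
      intro h; rw [Finsupp.single_eq_zero] at h; omega
    have hP1 : MvPowerSeries.coeff (Finsupp.single s n)
        (B0Z A z₁ * (MvPowerSeries.C : A →+* MvPowerSeries (Fin 2) A) z₂ * B1W A z₂)
        = z₂ * (z₁ ^ (if s = 0 then n else 0) * algebraMap ℚ A (b0coeff (if s = 0 then n else 0))
            * (z₂ ^ (if s = 0 then 0 else n) * algebraMap ℚ A (b1coeff (if s = 0 then 0 else n)))) := by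
      have : B0Z A z₁ * (MvPowerSeries.C : A →+* MvPowerSeries (Fin 2) A) z₂ * B1W A z₂
          = (MvPowerSeries.C : A →+* MvPowerSeries (Fin 2) A) z₂ * (B0Z A z₁ * B1W A z₂) := by ring
      rw [this, MvPowerSeries.coeff_C_mul, MvPowerSeries.coeff_mul]
      interval_cases n <;> fin_cases s <;>
        simp [Finsupp.antidiagonal_single, Finset.sum_map, MvPowerSeries.coeff_apply,
          B0Z, B1W, Finsupp.single_apply, Algebra.smul_def, bc0_0, bc1_0,
          Finset.Nat.sum_antidiagonal_eq_sum_range_succ_mk, Finset.sum_range_succ]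
    have hP2 : MvPowerSeries.coeff (Finsupp.single s n)
        ((MvPowerSeries.C : A →+* MvPowerSeries (Fin 2) A) z₁ * B1Z A z₁ * B0W A z₂)
        = z₁ * (z₁ ^ (if s = 0 then n else 0) * algebraMap ℚ A (b1coeff (if s = 0 then n else 0))
            * (z₂ ^ (if s = 0 then 0 else n) * algebraMap ℚ A (b0coeff (if s = 0 then 0 else n)))) := by
      rw [mul_assoc, MvPowerSeries.coeff_C_mul, MvPowerSeries.coeff_mul]
      interval_cases n <;> fin_cases s <;>
        simp [Finsupp.antidiagonal_single, Finset.sum_map, MvPowerSeries.coeff_apply,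
          B1Z, B0W, Finsupp.single_apply, Algebra.smul_def, bc0_0, bc1_0,
          Finset.Nat.sum_antidiagonal_eq_sum_range_succ_mk, Finset.sum_range_succ]
    rw [edgeNumerator, map_sub, map_sub, hC, hP1, hP2]
    ring
  have e0 : MvPowerSeries.coeff 0 Q = 60 * (z₁ * z₂) - 84 := by
    have h := congrArg (MvPowerSeries.coeff (Finsupp.single (0:Fin 2) 1)) hQ
    rw [add_mul, map_add, coeff_XQ A Q 0 _ (hles 0 1 le_rfl), coeff_XQ_ne A Q 1 _ hle01,
      tsub_self, add_zero, hnum 0 1 le_rfl (by norm_num)] at h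
    simp [bc0_1, bc1_1, bc0_0, bc1_0, map_ofNat] at h
    rw [MvPowerSeries.coeff_zero_eq_constantCoeff, h]
    linear_combination (-84 : A) * h₁
  refine ⟨e0, ?_, ?_⟩
  · have h := congrArg (MvPowerSeries.coeff (Finsupp.single (0:Fin 2) 2)) hQ
    rw [add_mul, map_add, coeff_XQ A Q 0 _ (hles 0 2 (by norm_num)), coeff_XQ_ne A Q 1 _ hle02,
      add_zero, hsub1, hnum 0 2 (by norm_num) le_rfl] at h
    simp [bc0_2, bc1_2, bc0_0, bc1_0, map_ofNat] at h
    rw [h]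
    linear_combination (32760 * z₁ - 27720 * z₂) * h₁
  · have h := congrArg (MvPowerSeries.coeff (Finsupp.single (1:Fin 2) 2)) hQ
    rw [add_mul, map_add, coeff_XQ A Q 1 _ (hles 1 2 (by norm_num)), coeff_XQ_ne A Q 0 _ hle20,
      zero_add, hsub2, hnum 1 2 (by norm_num) le_rfl] at h
    simp [bc0_2, bc1_2, bc0_0, bc1_0, map_ofNat] at h
    rw [h]
    linear_combination (32760 * z₂ - 27720 * z₁) * h₂
end

section
/- With R(z) as above, the inverse power series R^{−1}(z) is given by the matrix [[B0^even(cz), B1^odd(cz)],[B0^odd(cz), B1^even(cz)]]. -/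
open PowerSeries Matrix

/-- `B0^even(c z)` as a power series in `z`. -/
noncomputable def B0evenC (c : ℚ) : PowerSeries ℚ :=
  PowerSeries.mk fun m => if Even m then b0coeff m * c ^ m else 0

/-- `B0^odd(c z)`. -/
noncomputable def B0oddC (c : ℚ) : PowerSeries ℚ :=
  PowerSeries.mk fun m => if ¬ Even m then b0coeff m * c ^ m else 0

/-- `B1^even(c z)`. -/
noncomputable def B1evenC (c : ℚ) : PowerSeries ℚ :=
  PowerSeries.mk fun m => if Even m then b1coeff m * c ^ m else 0

/-- `B1^odd(c z)`. -/
noncomputable def B1oddC (c : ℚ) : PowerSeries ℚ :=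
  PowerSeries.mk fun m => if ¬ Even m then b1coeff m * c ^ m else 0

/-- The `R`-matrix `R(z)`, as a `2×2` matrix of power series in `z`. -/
noncomputable def Rmat (c : ℚ) : Matrix (Fin 2) (Fin 2) (PowerSeries ℚ) :=
  !![B1evenC c, -B1oddC c; -B0oddC c, B0evenC c]

/-- `R(-z)`: even parts are unchanged, odd parts change sign. -/
noncomputable def RmatNeg (c : ℚ) : Matrix (Fin 2) (Fin 2) (PowerSeries ℚ) :=
  !![B1evenC c, B1oddC c; B0oddC c, B0evenC c]


/-- The claimed inverse matrix `R^{-1}(z)`. -/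
noncomputable def RmatInv (c : ℚ) : Matrix (Fin 2) (Fin 2) (PowerSeries ℚ) :=
  !![B0evenC c, B1oddC c; B0oddC c, B1evenC c]

/-! ### Auxiliary development: the Faber–Zagier hypergeometric identity -/

noncomputable def faQ (m : ℕ) : ℚ :=
  (Nat.factorial (6*m) : ℚ) / ((Nat.factorial (2*m) : ℚ) * (Nat.factorial (3*m) : ℚ))

lemma fact_cast_ne (m : ℕ) : ((Nat.factorial m : ℕ) : ℚ) ≠ 0 := by
  exact_mod_cast Nat.factorial_ne_zero m

lemma faQ_succ (m : ℕ) :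
    faQ (m+1) = 12*(6*(m:ℚ)+1)*(6*(m:ℚ)+5) * faQ m / ((m:ℚ)+1) := by
  unfold faQ
  rw [show 6*(m+1) = 6*m+1+1+1+1+1+1 by ring, show 2*(m+1) = 2*m+1+1 by ring,
      show 3*(m+1) = 3*m+1+1+1 by ring]
  simp only [Nat.factorial_succ]
  have h6 := fact_cast_ne (6*m)
  have h2 := fact_cast_ne (2*m)
  have h3 := fact_cast_ne (3*m)
  have hm : ((m:ℚ)+1) ≠ 0 := by positivity
  push_cast
  field_simp
  ring

lemma faQ_zero : faQ 0 = 1 := by norm_num [faQ, Nat.factorial]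
lemma faQ_one : faQ 1 = 60 := by norm_num [faQ, Nat.factorial]

noncomputable def XXQ (n k : ℚ) : ℚ :=
  2592*(n+1)*k^2 - (7776*n^2+20736*n+12096)*k + (5184*n^3+23328*n^2+32472*n+13464)

noncomputable def ffQ (n k : ℕ) : ℚ :=
  (-1)^(n+k) * faQ (n-k) * faQ k * (1+6*(k:ℚ))/(1-6*(k:ℚ))

noncomputable def GGQ (n k : ℕ) : ℚ :=
  (-1)^(n+k) * (k:ℚ) * (1+6*(k:ℚ)) * XXQ (n:ℚ) (k:ℚ) * faQ k * faQ (n+2-k) /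
    (144*(1-6*(k:ℚ))*(6*(n:ℚ)-6*(k:ℚ)+7)*(6*(n:ℚ)-6*(k:ℚ)+11))

noncomputable def cQ (n : ℕ) : ℚ := ((n:ℚ)+1)*((n:ℚ)+2)/2

noncomputable def pQ (n : ℕ) : ℚ := -10368*(n:ℚ)*((n:ℚ)+2)*(3*(n:ℚ)+2)*(3*(n:ℚ)+4)

noncomputable def SSQ (n : ℕ) : ℚ := ∑ k ∈ Finset.range (n+1), ffQ n k

lemma one_sub_six_ne (k : ℕ) : (1:ℚ) - 6*(k:ℚ) ≠ 0 := by
  intro h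
  have h1 : ((6*k : ℕ) : ℚ) = 1 := by push_cast; linarith
  have h2 : 6*k = 1 := by exact_mod_cast h1
  omega

set_option maxHeartbeats 4000000 in
lemma TI1 (k d : ℕ) :
    cQ (k+d) * ffQ (k+d+2) k + pQ (k+d) * ffQ (k+d) k
      = GGQ (k+d) (k+1) - GGQ (k+d) k := by
  unfold ffQ GGQ cQ pQ XXQ
  rw [show k+d+2-k = d+2 by omega, show k+d-k = d by omega, show k+d+2-(k+1) = d+1 by omega]
  rw [show d+2 = (d+1)+1 by omega]
  rw [faQ_succ (d+1), faQ_succ d, faQ_succ k]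
  have E1 : ((-1:ℚ))^(k+d+2+k) = (-1)^(k+d+k) := by
    rw [show k+d+2+k = (k+d+k)+2 by omega, pow_add]; norm_num
  have E3 : ((-1:ℚ))^(k+d+(k+1)) = -((-1:ℚ))^(k+d+k) := by
    rw [show k+d+(k+1) = (k+d+k)+1 by omega, pow_succ]; ring
  rw [E1, E3]
  have hK1 : (k:ℚ)+1 ≠ 0 := by positivity
  have hD1 : (d:ℚ)+1 ≠ 0 := by positivity
  have hD2 : (d:ℚ)+1+1 ≠ 0 := by positivity
  have h16k := one_sub_six_ne k
  have h16k1 : (1:ℚ)-6*((k:ℚ)+1) ≠ 0 := by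
    have := one_sub_six_ne (k+1); push_cast at this; exact this
  have h7 : 6*((k:ℚ)+(d:ℚ))-6*(k:ℚ)+7 ≠ 0 := by
    rw [show 6*((k:ℚ)+(d:ℚ))-6*(k:ℚ)+7 = 6*(d:ℚ)+7 by ring]; positivity
  have h11 : 6*((k:ℚ)+(d:ℚ))-6*(k:ℚ)+11 ≠ 0 := by
    rw [show 6*((k:ℚ)+(d:ℚ))-6*(k:ℚ)+11 = 6*(d:ℚ)+11 by ring]; positivity
  have h1 : 6*((k:ℚ)+(d:ℚ))-6*((k:ℚ)+1)+7 ≠ 0 := by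
    rw [show 6*((k:ℚ)+(d:ℚ))-6*((k:ℚ)+1)+7 = 6*(d:ℚ)+1 by ring]; positivity
  have h5 : 6*((k:ℚ)+(d:ℚ))-6*((k:ℚ)+1)+11 ≠ 0 := by
    rw [show 6*((k:ℚ)+(d:ℚ))-6*((k:ℚ)+1)+11 = 6*(d:ℚ)+5 by ring]; positivity
  push_cast
  simp only [show 6*((k:ℚ)+(d:ℚ))-6*(k:ℚ)+7 = 6*(d:ℚ)+7 by ring, show 6*((k:ℚ)+(d:ℚ))-6*(k:ℚ)+11 = 6*(d:ℚ)+11 by ring, show 6*((k:ℚ)+(d:ℚ))-6*((k:ℚ)+1)+7 = 6*(d:ℚ)+1 by ring, show 6*((k:ℚ)+(d:ℚ))-6*((k:ℚ)+1)+11 = 6*(d:ℚ)+5 by ring]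
  have h16k' : (1:ℚ) - (k:ℚ)*6 ≠ 0 := by rwa [mul_comm]
  field_simp
  ring

set_option maxHeartbeats 1000000 in
lemma TI2 (n : ℕ) :
    cQ n * ffQ (n+2) (n+1) = GGQ n (n+2) - GGQ n (n+1) := by
  unfold ffQ GGQ cQ XXQ
  rw [show n+2-(n+1) = 1 by omega, show n+2-(n+2) = 0 by omega]
  rw [show n+2 = (n+1)+1 by omega]
  rw [faQ_succ (n+1), faQ_zero, faQ_one]
  have E1 : ((-1:ℚ))^(n+1+1+(n+1)) = -1 := by
    rw [show n+1+1+(n+1) = 2*(n+1)+1 by omega, pow_succ, pow_mul]; norm_num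
  have E2 : ((-1:ℚ))^(n+((n+1)+1)) = 1 := by
    rw [show n+((n+1)+1) = 2*(n+1) by omega, pow_mul]; norm_num
  have E3 : ((-1:ℚ))^(n+(n+1)) = -1 := by
    rw [show n+(n+1) = 2*n+1 by omega, pow_succ, pow_mul]; norm_num
  rw [E1, E2, E3]
  have hN1 : (n:ℚ)+1 ≠ 0 := by positivity
  have hN11 : (n:ℚ)+1+1 ≠ 0 := by positivity
  have h16a : (1:ℚ)-6*((n:ℚ)+1) ≠ 0 := by
    have := one_sub_six_ne (n+1); push_cast at this; exact this
  have h16b : (1:ℚ)-6*((n:ℚ)+1+1) ≠ 0 := by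
    have := one_sub_six_ne (n+2); push_cast at this
    convert this using 2; ring
  have hA : 6*(n:ℚ)-6*((n:ℚ)+1)+7 ≠ 0 := by
    rw [show 6*(n:ℚ)-6*((n:ℚ)+1)+7 = 1 by ring]; norm_num
  have hB : 6*(n:ℚ)-6*((n:ℚ)+1)+11 ≠ 0 := by
    rw [show 6*(n:ℚ)-6*((n:ℚ)+1)+11 = 5 by ring]; norm_num
  have hC : 6*(n:ℚ)-6*((n:ℚ)+1+1)+7 ≠ 0 := by
    rw [show 6*(n:ℚ)-6*((n:ℚ)+1+1)+7 = -5 by ring]; norm_num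
  have hD : 6*(n:ℚ)-6*((n:ℚ)+1+1)+11 ≠ 0 := by
    rw [show 6*(n:ℚ)-6*((n:ℚ)+1+1)+11 = -1 by ring]; norm_num
  push_cast
  simp only [show 6*(n:ℚ)-6*((n:ℚ)+1)+7 = 1 by ring, show 6*(n:ℚ)-6*((n:ℚ)+1)+11 = 5 by ring, show 6*(n:ℚ)-6*((n:ℚ)+1+1)+7 = -5 by ring, show 6*(n:ℚ)-6*((n:ℚ)+1+1)+11 = -1 by ring]
  have h16a' : (1:ℚ) - ((n:ℚ)+1)*6 ≠ 0 := by rwa [mul_comm]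
  have h16b' : (1:ℚ) - ((n:ℚ)+1+1)*6 ≠ 0 := by rwa [mul_comm]
  field_simp
  ring

set_option maxHeartbeats 1000000 in
lemma TI3 (n : ℕ) :
    cQ n * ffQ (n+2) (n+2) = -GGQ n (n+2) := by
  unfold ffQ GGQ cQ XXQ
  rw [show n+2-(n+2) = 0 by omega]
  rw [faQ_zero]
  have E1 : ((-1:ℚ))^(n+2+(n+2)) = 1 := by
    rw [show n+2+(n+2) = 2*(n+2) by omega, pow_mul]; norm_num
  have E2 : ((-1:ℚ))^(n+(n+2)) = 1 := by
    rw [show n+(n+2) = 2*(n+1) by omega, pow_mul]; norm_num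
  rw [E1, E2]
  have h16b : (1:ℚ)-6*((n:ℚ)+2) ≠ 0 := by
    have := one_sub_six_ne (n+2); push_cast at this; exact this
  have hC : 6*(n:ℚ)-6*((n:ℚ)+2)+7 ≠ 0 := by
    rw [show 6*(n:ℚ)-6*((n:ℚ)+2)+7 = -5 by ring]; norm_num
  have hD : 6*(n:ℚ)-6*((n:ℚ)+2)+11 ≠ 0 := by
    rw [show 6*(n:ℚ)-6*((n:ℚ)+2)+11 = -1 by ring]; norm_num
  push_cast
  simp only [show 6*(n:ℚ)-6*((n:ℚ)+2)+7 = -5 by ring, show 6*(n:ℚ)-6*((n:ℚ)+2)+11 = -1 by ring]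
  have h16b' : (1:ℚ) - ((n:ℚ)+2)*6 ≠ 0 := by rwa [mul_comm]
  field_simp
  ring

lemma GGQ_zero (n : ℕ) : GGQ n 0 = 0 := by
  simp [GGQ]

lemma REC (n : ℕ) : cQ n * SSQ (n+2) + pQ n * SSQ n = 0 := by
  have S2 : SSQ (n+2) = (∑ k ∈ Finset.range (n+1), ffQ (n+2) k)
      + ffQ (n+2) (n+1) + ffQ (n+2) (n+2) := by
    unfold SSQ
    rw [show n+2+1 = n+1+1+1 by omega]
    rw [Finset.sum_range_succ, Finset.sum_range_succ]
  have T1 : ∑ k ∈ Finset.range (n+1), (cQ n * ffQ (n+2) k + pQ n * ffQ n k)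
      = GGQ n (n+1) - GGQ n 0 := by
    rw [← Finset.sum_range_sub (f := fun k => GGQ n k) (n+1)]
    apply Finset.sum_congr rfl
    intro k hk
    have hkn : k ≤ n := by
      have := Finset.mem_range.mp hk; omega
    have h := TI1 k (n-k)
    rw [show k+(n-k) = n by omega] at h
    exact h
  have hsum : cQ n * SSQ (n+2) + pQ n * SSQ n
      = (∑ k ∈ Finset.range (n+1), (cQ n * ffQ (n+2) k + pQ n * ffQ n k))
        + cQ n * ffQ (n+2) (n+1) + cQ n * ffQ (n+2) (n+2) := by
    rw [S2]
    unfold SSQ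
    rw [Finset.sum_add_distrib, ← Finset.mul_sum, ← Finset.mul_sum]
    ring
  rw [hsum, T1, TI2, TI3, GGQ_zero]
  ring

lemma cQ_ne (n : ℕ) : cQ n ≠ 0 := by
  unfold cQ; positivity

lemma SSQ_even_zero : ∀ m : ℕ, SSQ (2*m+2) = 0 := by
  intro m
  induction m with
  | zero =>
    have h := REC 0
    have hp : pQ 0 = 0 := by norm_num [pQ]
    rw [hp, zero_mul, add_zero] at h
    have := mul_eq_zero.mp h
    rcases this with h' | h'
    · exact absurd h' (cQ_ne 0)
    · simpa using h'
  | succ m ih =>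
    have h := REC (2*m+2)
    rw [ih, mul_zero, add_zero] at h
    have := mul_eq_zero.mp h
    rcases this with h' | h'
    · exact absurd h' (cQ_ne _)
    · have e : 2*(m+1)+2 = 2*m+2+2 := by ring
      rw [e]; exact h'

lemma b0_eq (m : ℕ) : b0coeff m = (-1)^m * faQ m := by
  unfold b0coeff faQ; ring

lemma b1_eq (m : ℕ) :
    b1coeff m = (-1)^m * faQ m * (1+6*(m:ℚ))/(1-6*(m:ℚ)) := by
  unfold b1coeff faQ; ring

lemma neg_one_pow_sub {j n : ℕ} (h : j ≤ n) : ((-1:ℚ))^(n-j) = (-1)^(n+j) := by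
  conv_rhs => rw [show n+j = (n-j)+2*j by omega]
  rw [pow_add, pow_mul]
  norm_num

lemma sign_sq (j : ℕ) : ((-1:ℚ))^j * ((-1:ℚ))^j = 1 := by
  rw [← pow_add, show j+j = 2*j by ring, pow_mul]; norm_num

/-- The key power series identity. -/
lemma keyPS (c : ℚ) : B0evenC c * B1evenC c - B0oddC c * B1oddC c = 1 := by
  ext n
  rw [map_sub, PowerSeries.coeff_mul, PowerSeries.coeff_mul, PowerSeries.coeff_one]
  simp only [B0evenC, B0oddC, B1evenC, B1oddC, PowerSeries.coeff_mk]
  rw [Finset.Nat.sum_antidiagonal_eq_sum_range_succ_mk,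
      Finset.Nat.sum_antidiagonal_eq_sum_range_succ_mk,
      ← Finset.sum_sub_distrib]
  by_cases hn : Even n
  · by_cases h0 : n = 0
    · subst h0
      simp [b0coeff, b1coeff, Nat.factorial]
    · -- n even, nonzero: sum equals c^n * SSQ n = 0
      have hterm : ∀ k ∈ Finset.range (n+1),
          ((if Even k then b0coeff k * c ^ k else 0) *
              (if Even (n-k) then b1coeff (n-k) * c ^ (n-k) else 0)
            - (if ¬ Even k then b0coeff k * c ^ k else 0) *
              (if ¬ Even (n-k) then b1coeff (n-k) * c ^ (n-k) else 0))
          = c^n * (b0coeff k * (((-1:ℚ))^(n-k) * b1coeff (n-k))) := by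
        intro k hk
        have hkn : k ≤ n := by have := Finset.mem_range.mp hk; omega
        have hcc : c ^ k * c ^ (n-k) = c ^ n := by
          rw [← pow_add, Nat.add_sub_cancel' hkn]
        by_cases hek : Even k
        · have henk : Even (n-k) := (Nat.even_sub hkn).mpr (iff_of_true hn hek)
          simp only [if_pos hek, if_pos henk, if_neg (not_not_intro hek),
            if_neg (not_not_intro henk)]
          rw [henk.neg_one_pow]
          calc b0coeff k * c ^ k * (b1coeff (n-k) * c ^ (n-k)) - 0 * 0
              = (c ^ k * c ^ (n-k)) * (b0coeff k * b1coeff (n-k)) := by ring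
            _ = c^n * (b0coeff k * (1 * b1coeff (n-k))) := by rw [hcc]; ring
        · have honk : ¬ Even (n-k) := by
            intro he
            exact hek (((Nat.even_sub hkn).mp he).mp hn)
          have honk' : Odd (n-k) := Nat.odd_iff.mpr (Nat.not_even_iff.mp honk)
          simp only [if_neg hek, if_neg honk, if_pos hek, if_pos honk]
          rw [honk'.neg_one_pow]
          calc 0 * 0 - b0coeff k * c ^ k * (b1coeff (n-k) * c ^ (n-k))
              = -((c ^ k * c ^ (n-k)) * (b0coeff k * b1coeff (n-k))) := by ring
            _ = c^n * (b0coeff k * (-1 * b1coeff (n-k))) := by rw [hcc]; ring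
      rw [Finset.sum_congr rfl hterm, ← Finset.mul_sum, if_neg h0]
      have hSS : (∑ k ∈ Finset.range (n+1), b0coeff k * (((-1:ℚ))^(n-k) * b1coeff (n-k)))
          = SSQ n := by
        have R := Finset.sum_range_reflect
          (fun j => b0coeff j * (((-1:ℚ))^(n-j) * b1coeff (n-j))) (n+1)
        rw [← R]
        unfold SSQ
        apply Finset.sum_congr rfl
        intro j hj
        have hjn : j ≤ n := by have := Finset.mem_range.mp hj; omega
        simp only [Nat.add_sub_cancel]
        rw [Nat.sub_sub_self hjn]
        rw [b0_eq, b1_eq]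
        unfold ffQ
        rw [neg_one_pow_sub hjn]
        linear_combination (((-1:ℚ))^(n+j) * faQ (n-j) * faQ j * (1+6*(j:ℚ))/(1-6*(j:ℚ))) * sign_sq j
      rw [hSS]
      obtain ⟨m, hm⟩ : ∃ m, n = 2*m+2 := by
        obtain ⟨t, ht⟩ := hn
        exact ⟨t-1, by omega⟩
      rw [hm, SSQ_even_zero m, mul_zero]
  · -- n odd: all terms vanish
    have h0 : n ≠ 0 := by rintro rfl; exact hn (Even.zero)
    rw [if_neg h0]
    apply Finset.sum_eq_zero
    intro k hk
    have hkn : k ≤ n := by have := Finset.mem_range.mp hk; omega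
    by_cases hek : Even k
    · have honk : ¬ Even (n-k) := by
        intro he
        exact hn ((Nat.even_sub hkn).mp he |>.mpr hek)
      simp [hek, honk]
    · have henk : Even (n-k) := by
        rw [Nat.even_sub hkn]
        constructor
        · intro h; exact absurd h hn
        · intro h; exact absurd h hek
      simp [hek, henk]


/-- `R^{-1}(z)` is given by `[[B0^even(cz), B1^odd(cz)],[B0^odd(cz), B1^even(cz)]]`. -/
theorem RmatInv_is_inverse (c : ℚ) (hc : c ≠ 0) :
    Rmat c * RmatInv c = 1 ∧ RmatInv c * Rmat c = 1 := by
  have key := keyPS c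
  constructor
  · unfold Rmat RmatInv
    rw [Matrix.mul_fin_two]
    rw [show B1evenC c * B0evenC c + -B1oddC c * B0oddC c = 1 by linear_combination key,
        show B1evenC c * B1oddC c + -B1oddC c * B1evenC c = 0 by ring,
        show -B0oddC c * B0evenC c + B0evenC c * B0oddC c = 0 by ring,
        show -B0oddC c * B1oddC c + B0evenC c * B1evenC c = 1 by linear_combination key]
    exact Matrix.one_fin_two.symm
  · unfold Rmat RmatInv
    rw [Matrix.mul_fin_two]
    rw [show B0evenC c * B1evenC c + B1oddC c * -B0oddC c = 1 by linear_combination key,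
        show B0evenC c * -B1oddC c + B1oddC c * B0evenC c = 0 by ring,
        show B0oddC c * B1evenC c + B1evenC c * -B0oddC c = 0 by ring,
        show B0oddC c * -B1oddC c + B1evenC c * B0evenC c = 1 by linear_combination key]
    exact Matrix.one_fin_two.symm
end
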